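/- Let r and s be rays in the plane with distinct apices P = p(r) and Q = p(s) whose supporting lines intersect in exactly one point I, and assume I ≠ P and I ≠ Q (hence P, Q, I are not collinear). Then every point x with x ≠ P, x ≠ Q and d∠(x, r) = d∠(x, s) lies on the unique circle passing through P, Q and I (the bisecting circle of r and s). -/

import Mathlib

noncomputable section

open Real

abbrev Pt : Type := EuclideanSpace ℝ (Fin 2)

instance : Fact (Module.finrank ℝ Pt = 2) := ⟨finrank_euclideanSpace_fin⟩

noncomputable def stdOrient : Orientation ℝ Pt (Fin 2) :=
  (EuclideanSpace.basisFun (Fin 2) ℝ).toBasis.orientation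

/-- A ray in the plane, given by its apex and its direction vector. -/
structure Ray2 where
  apex : Pt
  dir : Pt

/-- The set of points of a ray. -/
def Ray2.carrier (r : Ray2) : Set Pt := {x | ∃ t : ℝ, 0 ≤ t ∧ x = r.apex + t • r.dir}

/-- The representative in `[0, 2π)` of an angle. -/
noncomputable def angleIco (θ : Real.Angle) : ℝ :=
  if 0 ≤ θ.toReal then θ.toReal else θ.toReal + 2 * π

open Classical in
/-- The counterclockwise angular distance from a point `x` to a ray `r`. -/
noncomputable def adist (x : Pt) (r : Ray2) : ℝ :=
  if x = r.apex then 0 else angleIco (stdOrient.oangle r.dir (x - r.apex))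

/-- The Voronoi region of a ray `r` in a finite set of rays `R`. -/
def rreg (R : Finset Ray2) (r : Ray2) : Set Pt :=
  {x | ∀ s ∈ R, s ≠ r → adist x r < adist x s}

/-- The rotating rays Voronoi diagram. -/
def RVD (R : Finset Ray2) : Set Pt :=
  (Set.univ \ ⋃ r ∈ R, rreg R r) ∪ ⋃ r ∈ R, r.carrier

/-- The point of the plane with the given coordinates. -/
noncomputable def pt (a b : ℝ) : Pt := (WithLp.equiv 2 (Fin 2 → ℝ)).symm ![a, b]

/-- The supporting line of a ray: the line through `p` with direction `u`. -/
def lineThrough (p u : Pt) : Set Pt := {x | ∃ t : ℝ, x = p + t • u}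

lemma coe_angleIco (θ : Real.Angle) : ((angleIco θ : ℝ) : Real.Angle) = θ := by
  unfold angleIco
  split
  · exact θ.coe_toReal
  · push_cast [Real.Angle.coe_add]
    rw [Real.Angle.coe_two_pi, add_zero, θ.coe_toReal]

/-- if the supporting lines of two rays with distinct apices `P`, `Q` meet in
exactly one point `I` distinct from both apices, then every point equidistant to the
two rays lies on the unique circle through `P`, `Q` and `I`. -/
theorem stmt1 (r s : Ray2) (hr : r.dir ≠ 0) (hs : s.dir ≠ 0) (hPQ : r.apex ≠ s.apex)
    (I : Pt) (hI : lineThrough r.apex r.dir ∩ lineThrough s.apex s.dir = {I})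
    (hIP : I ≠ r.apex) (hIQ : I ≠ s.apex)
    (x : Pt) (hxP : x ≠ r.apex) (hxQ : x ≠ s.apex) (hx : adist x r = adist x s) :
    EuclideanGeometry.Cospherical ({r.apex, s.apex, I, x} : Set Pt) := by
  letI : Module.Oriented ℝ Pt (Fin 2) := ⟨stdOrient⟩
  set P := r.apex
  set Q := s.apex
  set u := r.dir
  set v := s.dir
  -- I on both lines
  have hImem : I ∈ lineThrough P u ∩ lineThrough Q v := by rw [hI]; rfl
  obtain ⟨⟨a, ha⟩, ⟨b, hb⟩⟩ := hImem
  have ha0 : a ≠ 0 := by rintro rfl; simp at ha; exact hIP ha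
  have hb0 : b ≠ 0 := by rintro rfl; simp at hb; exact hIQ hb
  have hxP' : x - P ≠ 0 := sub_ne_zero.mpr hxP
  have hxQ' : x - Q ≠ 0 := sub_ne_zero.mpr hxQ
  -- key angle equality
  have key : stdOrient.oangle u (x - P) = stdOrient.oangle v (x - Q) := by
    have := congrArg (fun t : ℝ => (t : Real.Angle)) hx
    simpa [adist, show x ≠ r.apex from hxP, show x ≠ s.apex from hxQ, coe_angleIco] using this
  -- angle at x
  have hx2 : stdOrient.oangle (P - x) (Q - x) = stdOrient.oangle u v := by
    rw [show P - x = -(x - P) from (neg_sub x P).symm, show Q - x = -(x - Q) from (neg_sub x Q).symm,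
      stdOrient.oangle_neg_neg]
    have h1 : stdOrient.oangle (x - P) u + stdOrient.oangle u (x - Q)
        = stdOrient.oangle (x - P) (x - Q) := stdOrient.oangle_add hxP' hr hxQ'
    have h2 : stdOrient.oangle u v + stdOrient.oangle v (x - Q)
        = stdOrient.oangle u (x - Q) := stdOrient.oangle_add hr hs hxQ'
    rw [← h1, ← h2, stdOrient.oangle_rev, key]
    abel
  -- angle at I
  have hI2 : (2 : ℤ) • stdOrient.oangle (P - I) (Q - I) = (2 : ℤ) • stdOrient.oangle u v := by
    have hPI : P - I = (-a) • u := by rw [ha]; module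
    have hQI : Q - I = (-b) • v := by rw [hb]; module
    rw [hPI, hQI, stdOrient.two_zsmul_oangle_smul_left_of_ne_zero _ _ (neg_ne_zero.mpr ha0),
      stdOrient.two_zsmul_oangle_smul_right_of_ne_zero _ _ (neg_ne_zero.mpr hb0)]
  have hang : (2 : ℤ) • EuclideanGeometry.oangle P I Q = (2 : ℤ) • EuclideanGeometry.oangle P x Q := by
    show (2 : ℤ) • stdOrient.oangle (P -ᵥ I) (Q -ᵥ I) = (2 : ℤ) • stdOrient.oangle (P -ᵥ x) (Q -ᵥ x)
    rw [vsub_eq_sub, vsub_eq_sub, vsub_eq_sub, vsub_eq_sub, hI2, hx2]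
  -- non-collinearity of P, I, Q
  have hncol : ¬ Collinear ℝ ({P, I, Q} : Set Pt) := by
    intro hc
    have hQmem : Q ∈ ({P, I, Q} : Set Pt) := by simp
    rw [collinear_iff_of_mem hQmem] at hc
    obtain ⟨w, hw⟩ := hc
    obtain ⟨c, hc1⟩ := hw I (by simp)
    obtain ⟨d, hd1⟩ := hw P (by simp)
    have hc0 : c ≠ 0 := by
      rintro rfl; simp at hc1; exact hIQ hc1
    -- I - Q = b • v and I - Q = c • w  ⇒  w = (c⁻¹ * b) • v
    have hwv : w = (c⁻¹ * b) • v := by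
      have h1 : c • w = b • v := by
        have : I - Q = c • w := by rw [hc1, vadd_eq_add]; module
        rw [← this, hb]; module
      rw [mul_smul, ← h1, smul_smul, inv_mul_cancel₀ hc0, one_smul]
    have hPline : P ∈ lineThrough Q v := by
      refine ⟨d * (c⁻¹ * b), ?_⟩
      rw [hd1, hwv, vadd_eq_add]; module
    have : P ∈ lineThrough P u ∩ lineThrough Q v := ⟨⟨0, by simp⟩, hPline⟩
    rw [hI] at this
    exact hIP this.symm
  have hcos := EuclideanGeometry.cospherical_of_two_zsmul_oangle_eq_of_not_collinear hang hncol
  have hset : ({P, Q, I, x} : Set Pt) = ({P, I, x, Q} : Set Pt) := by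
    ext y; simp; tauto
  rwa [hset]
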